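/- Let P and Q be distributions on ℝ^d (d ≥ 2) of random vectors X and Y respectively such that: (i) X is 1-symmetric (u⬝X =_d ‖u‖₁ X₁ for all u), (ii) Y is 1/2-symmetric (u⬝Y =_d ‖u‖_{1/2} Y₁ for all u), (iii) X₁ and Y₁ have the same continuous CDF F. Then the halfspace depths of P and Q coincide: D(x;P) = D(x;Q) = F(-‖x‖_∞) for all x ∈ ℝ^d. -/
import Mathlib


open MeasureTheory

/-- The `ℓ^α` quasi-norm `(∑ᵢ |uᵢ|^α)^(1/α)` on `ℝ^d`. -/
noncomputable def alphaNorm {d : ℕ} (α : ℝ) (u : Fin d → ℝ) : ℝ :=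
    (∑ i, |u i| ^ α) ^ (1 / α)

/-- The halfspace (Tukey) depth of `x` with respect to a measure `P` on `ℝ^d`. -/
noncomputable def halfspaceDepth {d : ℕ} (x : Fin d → ℝ) (P : Measure (Fin d → ℝ)) : ℝ :=
    ⨅ u : {u : Fin d → ℝ // u ≠ 0}, (P {z | ∑ i, u.1 i * z i ≤ ∑ i, u.1 i * x i}).toReal

lemma alphaNorm_pos {d : ℕ} {α : ℝ} (hα : 0 < α) {u : Fin d → ℝ} (hu : u ≠ 0) :
    0 < alphaNorm α u := by
  obtain ⟨j, hj⟩ : ∃ j, u j ≠ 0 := Function.ne_iff.mp hu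
  unfold alphaNorm
  apply Real.rpow_pos_of_pos
  apply Finset.sum_pos' (fun i _ => Real.rpow_nonneg (abs_nonneg _) _)
  exact ⟨j, Finset.mem_univ j, Real.rpow_pos_of_pos (abs_pos.mpr hj) _⟩

lemma alphaNorm_one {d : ℕ} (u : Fin d → ℝ) : alphaNorm 1 u = ∑ i, |u i| := by
  simp [alphaNorm]

lemma alphaNorm_one_le_half {d : ℕ} (u : Fin d → ℝ) :
    alphaNorm 1 u ≤ alphaNorm (1/2) u := by
  rw [alphaNorm_one]
  unfold alphaNorm
  set s : Fin d → ℝ := fun i => |u i| ^ ((1:ℝ)/2) with hs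
  have hs0 : ∀ i, 0 ≤ s i := fun i => Real.rpow_nonneg (abs_nonneg _) _
  have h2 : (1:ℝ)/(1/2) = 2 := by norm_num
  rw [h2]
  have hsq : ∀ i, |u i| = s i ^ 2 := by
    intro i
    rw [hs]
    rw [← Real.rpow_natCast (|u i| ^ ((1:ℝ)/2)) 2, ← Real.rpow_mul (abs_nonneg _)]
    norm_num
  calc ∑ i, |u i| = ∑ i, s i ^ 2 := by simp only [hsq]
    _ ≤ ∑ i, s i * ∑ j, s j := Finset.sum_le_sum fun i _ => by
        have h1 : s i ≤ ∑ j, s j :=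
          Finset.single_le_sum (fun j _ => hs0 j) (Finset.mem_univ i)
        nlinarith [hs0 i]
    _ = (∑ i, s i) ^ 2 := by rw [← Finset.sum_mul]; ring
    _ = (∑ i, s i) ^ (2:ℝ) := by
        rw [show (2:ℝ) = ((2:ℕ):ℝ) by norm_num, Real.rpow_natCast]

lemma alphaNorm_single {d : ℕ} {α : ℝ} (hα : 0 < α) (j : Fin d) (c : ℝ) (hc : |c| = 1) :
    alphaNorm α (fun i => if i = j then c else 0) = 1 := by
  unfold alphaNorm
  have h : ∑ i, |if i = j then c else 0| ^ α = 1 := by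
    rw [Finset.sum_eq_single j]
    · simp [hc]
    · intro i _ hij; simp [hij, Real.zero_rpow hα.ne']
    · simp
  rw [h, Real.one_rpow]

lemma depth_eq {d : ℕ} {α : ℝ} (hα : 0 < α)
    (hle : ∀ u : Fin d → ℝ, ∑ i, |u i| ≤ alphaNorm α u)
    (μ : Measure (Fin d → ℝ)) [IsProbabilityMeasure μ]
    (i0 : Fin d)
    (hsym : ∀ u : Fin d → ℝ, Measure.map (fun z => ∑ i, u i * z i) μ
        = Measure.map (fun z => alphaNorm α u * z i0) μ)
    (F : ℝ → ℝ) (hF : ∀ s, F s = (μ {z | z i0 ≤ s}).toReal)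
    (x : Fin d → ℝ) :
    halfspaceDepth x μ = F (-(⨆ i, |x i|)) := by
  haveI : Nonempty (Fin d) := ⟨i0⟩
  have hmono : Monotone F := by
    intro s t hst
    rw [hF s, hF t]
    exact ENNReal.toReal_mono (measure_ne_top μ _)
      (measure_mono fun z hz => le_trans hz hst)
  set M := ⨆ i, |x i| with hMdef
  obtain ⟨j, hj⟩ : ∃ j, ∀ i, |x i| ≤ |x j| := Finite.exists_max (fun i => |x i|)
  have hM : M = |x j| :=
    le_antisymm (ciSup_le hj) (le_ciSup ⟨|x j|, by rintro y ⟨i, rfl⟩; exact hj i⟩ j)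
  have hM0 : 0 ≤ M := hM ▸ abs_nonneg _
  -- per-u formula
  have hval : ∀ (u : Fin d → ℝ), u ≠ 0 →
      (μ {z | ∑ i, u i * z i ≤ ∑ i, u i * x i}).toReal
        = F ((∑ i, u i * x i) / alphaNorm α u) := by
    intro u hu
    have ha : 0 < alphaNorm α u := alphaNorm_pos hα hu
    have hfm : Measurable (fun z : Fin d → ℝ => ∑ i, u i * z i) :=
      Finset.measurable_sum _ fun i _ => (measurable_pi_apply i).const_mul _
    have hgm : Measurable (fun z : Fin d → ℝ => alphaNorm α u * z i0) :=
      (measurable_pi_apply i0).const_mul _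
    have h1 : μ {z | ∑ i, u i * z i ≤ ∑ i, u i * x i}
        = (Measure.map (fun z => ∑ i, u i * z i) μ) (Set.Iic (∑ i, u i * x i)) := by
      rw [Measure.map_apply hfm measurableSet_Iic]; rfl
    have h2 : (Measure.map (fun z => alphaNorm α u * z i0) μ) (Set.Iic (∑ i, u i * x i))
        = μ {z | z i0 ≤ (∑ i, u i * x i) / alphaNorm α u} := by
      rw [Measure.map_apply hgm measurableSet_Iic]
      congr 1
      ext z
      simp only [Set.mem_preimage, Set.mem_Iic, Set.mem_setOf_eq]
      rw [le_div_iff₀' ha]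
    rw [hF, h1, hsym u, h2]
  -- lower bound on the arguments
  have ineq : ∀ u : {u : Fin d → ℝ // u ≠ 0},
      -M ≤ (∑ i, u.1 i * x i) / alphaNorm α u.1 := by
    rintro ⟨u, hu⟩
    have ha : 0 < alphaNorm α u := alphaNorm_pos hα hu
    rw [le_div_iff₀ ha]
    have h1 : |∑ i, u i * x i| ≤ (∑ i, |u i|) * M := by
      calc |∑ i, u i * x i| ≤ ∑ i, |u i * x i| := Finset.abs_sum_le_sum_abs _ _
        _ = ∑ i, |u i| * |x i| := by simp [abs_mul]
        _ ≤ ∑ i, |u i| * M :=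
            Finset.sum_le_sum fun i _ =>
              mul_le_mul_of_nonneg_left ((hj i).trans hM.ge) (abs_nonneg _)
        _ = (∑ i, |u i|) * M := by rw [Finset.sum_mul]
    have h2 : (∑ i, |u i|) * M ≤ alphaNorm α u * M :=
      mul_le_mul_of_nonneg_right (hle u) hM0
    have h3 := neg_abs_le (∑ i, u i * x i)
    nlinarith
  unfold halfspaceDepth
  have heq : (fun u : {u : Fin d → ℝ // u ≠ 0} =>
      (μ {z | ∑ i, u.1 i * z i ≤ ∑ i, u.1 i * x i}).toReal)
      = fun u => F ((∑ i, u.1 i * x i) / alphaNorm α u.1) :=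
    funext fun u => hval u.1 u.2
  rw [heq]
  haveI : Nonempty {u : Fin d → ℝ // u ≠ 0} :=
    ⟨⟨fun _ => 1, fun h => one_ne_zero (congrFun h i0)⟩⟩
  apply le_antisymm
  · set c : ℝ := if 0 ≤ x j then -1 else 1 with hc
    have hcabs : |c| = 1 := by rw [hc]; split_ifs <;> simp
    set u0 : Fin d → ℝ := fun i => if i = j then c else 0 with hu0
    have hu0ne : u0 ≠ 0 := by
      intro h
      have h' := congrFun h j
      simp only [hu0, if_pos rfl, Pi.zero_apply] at h'
      rw [hc] at h'; split_ifs at h' <;> norm_num at h'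
    have hsum : ∑ i, u0 i * x i = -M := by
      rw [hM, hu0]
      rw [Finset.sum_eq_single j]
      · simp only [if_pos rfl, hc]
        rcases le_or_gt 0 (x j) with h | h
        · rw [if_pos h, abs_of_nonneg h]; norm_num
        · rw [if_neg (not_le.mpr h), abs_of_neg h]; norm_num
      · intro i _ hij; simp [hij]
      · simp
    have hnorm : alphaNorm α u0 = 1 := alphaNorm_single hα j c hcabs
    have hbdd : BddBelow (Set.range fun u : {u : Fin d → ℝ // u ≠ 0} =>
        F ((∑ i, u.1 i * x i) / alphaNorm α u.1)) :=
      ⟨F (-M), by rintro y ⟨u, rfl⟩; exact hmono (ineq u)⟩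
    have h := ciInf_le hbdd ⟨u0, hu0ne⟩
    rwa [hsum, hnorm, div_one] at h
  · exact le_ciInf fun u => hmono (ineq u)

theorem depths_coincide (d : ℕ) (hd : 2 ≤ d)
    (P Q : Measure (Fin d → ℝ)) [IsProbabilityMeasure P] [IsProbabilityMeasure Q]
    (hsymP : ∀ u : Fin d → ℝ,
      Measure.map (fun z => ∑ i, u i * z i) P
        = Measure.map (fun z => alphaNorm 1 u * z ⟨0, by omega⟩) P)
    (hsymQ : ∀ u : Fin d → ℝ,
      Measure.map (fun z => ∑ i, u i * z i) Q
        = Measure.map (fun z => alphaNorm (1/2) u * z ⟨0, by omega⟩) Q)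
    (F : ℝ → ℝ)
    (hFP : ∀ s, F s = (P {z | z ⟨0, by omega⟩ ≤ s}).toReal)
    (hFQ : ∀ s, F s = (Q {z | z ⟨0, by omega⟩ ≤ s}).toReal)
    (hF : Continuous F) :
    ∀ x : Fin d → ℝ,
      halfspaceDepth x P = F (-(⨆ i, |x i|)) ∧
      halfspaceDepth x Q = F (-(⨆ i, |x i|)) := by
  intro x
  constructor
  · exact depth_eq one_pos (fun u => (alphaNorm_one u).ge) P ⟨0, by omega⟩ hsymP F hFP x
  · exact depth_eq (by norm_num : (0:ℝ) < 1/2)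
      (fun u => by rw [← alphaNorm_one]; exact alphaNorm_one_le_half u)
      Q ⟨0, by omega⟩ hsymQ F hFQ x
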